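/- Let a_1 < a_2 < ... < a_n (n ≥ 5) be real numbers such that the set of pairwise sums {a_i + a_j : i < j} has exactly 2n - 3 elements. Then the points are equally spaced, i.e., a_{k+1} - a_k is constant for 1 ≤ k ≤ n-1. -/

import Mathlib

open Finset

lemma sum_key (n : ℕ) (hn : 5 ≤ n) (a : Fin n → ℝ) (ha : StrictMono a)
    (h : (((Finset.univ : Finset (Fin n × Fin n)).filter (fun p => p.1 < p.2)).image
        (fun p => a p.1 + a p.2)).card = 2 * n - 3) :
    ∀ j : ℕ, 2 ≤ j → ∀ hj : j ≤ n - 2,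
      a ⟨1, by omega⟩ + a ⟨j, by omega⟩ = a ⟨0, by omega⟩ + a ⟨j + 1, by omega⟩ := by
  set S := (((Finset.univ : Finset (Fin n × Fin n)).filter (fun p => p.1 < p.2)).image
      (fun p => a p.1 + a p.2)) with hSdef
  set c : ℕ → ℝ := fun k => if hk : k + 1 < n then a ⟨0, by omega⟩ + a ⟨k + 1, hk⟩
      else a ⟨min (k - (n - 2)) (n - 1), by omega⟩ + a ⟨n - 1, by omega⟩ with hcdef
  have hmono : ∀ k1 k2, k1 < k2 → k2 < 2 * n - 3 → c k1 < c k2 := by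
    intro k1 k2 hlt hk2
    by_cases h1 : k1 + 1 < n <;> by_cases h2 : k2 + 1 < n
    · rw [hcdef]; simp only [dif_pos h1, dif_pos h2]
      exact (add_lt_add_iff_left _).mpr (ha (by simp [Fin.mk_lt_mk]; omega))
    · rw [hcdef]; simp only [dif_pos h1, dif_neg h2]
      refine add_lt_add_of_lt_of_le (ha (by simp [Fin.mk_lt_mk]; omega))
        (ha.monotone (by simp [Fin.mk_le_mk]; omega))
    · omega
    · rw [hcdef]; simp only [dif_neg h1, dif_neg h2]
      exact (add_lt_add_iff_right _).mpr (ha (by simp [Fin.mk_lt_mk]; omega))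
  have hCsub : (Finset.range (2 * n - 3)).image c ⊆ S := by
    intro x hx
    obtain ⟨k, hk, rfl⟩ := Finset.mem_image.mp hx
    rw [Finset.mem_range] at hk
    rw [hSdef]
    by_cases h1 : k + 1 < n
    · rw [hcdef]; simp only [dif_pos h1]
      exact Finset.mem_image.mpr ⟨(⟨0, by omega⟩, ⟨k + 1, h1⟩),
        Finset.mem_filter.mpr ⟨Finset.mem_univ _, by simp [Fin.mk_lt_mk]⟩, rfl⟩
    · rw [hcdef]; simp only [dif_neg h1]
      exact Finset.mem_image.mpr ⟨(⟨min (k - (n - 2)) (n - 1), by omega⟩, ⟨n - 1, by omega⟩),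
        Finset.mem_filter.mpr ⟨Finset.mem_univ _, by simp [Fin.mk_lt_mk]; omega⟩, rfl⟩
  have hCcard : ((Finset.range (2 * n - 3)).image c).card = 2 * n - 3 := by
    rw [Finset.card_image_of_injOn, Finset.card_range]
    intro k1 hk1 k2 hk2 he
    rw [Finset.mem_coe, Finset.mem_range] at hk1 hk2
    rcases lt_trichotomy k1 k2 with hc | hc | hc
    · exact absurd he (ne_of_lt (hmono _ _ hc hk2))
    · exact hc
    · exact absurd he.symm (ne_of_lt (hmono _ _ hc hk1))
  have hSC : S = (Finset.range (2 * n - 3)).image c :=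
    (Finset.eq_of_subset_of_card_le hCsub (by rw [h, hCcard])).symm
  have hmem : ∀ j : ℕ, 2 ≤ j → ∀ hj : j ≤ n - 2,
      ∃ k, k < 2 * n - 3 ∧ c k = a ⟨1, by omega⟩ + a ⟨j, by omega⟩ := by
    intro j h2 hj
    have : a ⟨1, by omega⟩ + a ⟨j, by omega⟩ ∈ S := by
      rw [hSdef]
      exact Finset.mem_image.mpr ⟨(⟨1, by omega⟩, ⟨j, by omega⟩),
        Finset.mem_filter.mpr ⟨Finset.mem_univ _, by simp [Fin.mk_lt_mk]; omega⟩, rfl⟩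
    rw [hSC] at this
    obtain ⟨k, hk, he⟩ := Finset.mem_image.mp this
    exact ⟨k, Finset.mem_range.mp hk, he⟩
  have main : ∀ t, ∀ j : ℕ, 2 ≤ j → ∀ hj : j ≤ n - 2, n - 2 - j = t →
      a ⟨1, by omega⟩ + a ⟨j, by omega⟩ = a ⟨0, by omega⟩ + a ⟨j + 1, by omega⟩ := by
    intro t
    induction t with
    | zero =>
      intro j h2 hj ht
      obtain ⟨k, hk, he⟩ := hmem j h2 hj
      by_cases h1 : k + 1 < n
      · rw [hcdef] at he; simp only [dif_pos h1] at he
        -- a 0 + a ⟨k+1⟩ = a 1 + a j, show k+1 = j+1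
        have hgt : (j : ℕ) < k + 1 := by
          have : a (⟨j, by omega⟩ : Fin n) < a ⟨k + 1, h1⟩ := by
            have h01 : a (⟨0, by omega⟩ : Fin n) < a ⟨1, by omega⟩ :=
              ha (by simp [Fin.mk_lt_mk])
            linarith
          have := ha.lt_iff_lt.mp this
          simpa [Fin.mk_lt_mk] using this
        have hkj : (⟨k + 1, h1⟩ : Fin n) = ⟨j + 1, by omega⟩ := by
          ext; simp; omega
        rw [hkj] at he
        exact he.symm
      · exfalso
        rw [hcdef] at he; simp only [dif_neg h1] at he
        have hlow : a (⟨1, by omega⟩ : Fin n) ≤ a ⟨min (k - (n - 2)) (n - 1), by omega⟩ :=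
          ha.monotone (by simp [Fin.mk_le_mk]; omega)
        have hhigh : a (⟨j, by omega⟩ : Fin n) < a ⟨n - 1, by omega⟩ :=
          ha (by simp [Fin.mk_lt_mk]; omega)
        linarith
    | succ t ih =>
      intro j h2 hj ht
      have hjlt : j < n - 2 := by omega
      have E := ih (j + 1) (by omega) (by omega) (by omega)
      obtain ⟨k, hk, he⟩ := hmem j h2 hj
      by_cases h1 : k + 1 < n
      · rw [hcdef] at he; simp only [dif_pos h1] at he
        have hgt : (j : ℕ) < k + 1 := by
          have : a (⟨j, by omega⟩ : Fin n) < a ⟨k + 1, h1⟩ := by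
            have h01 : a (⟨0, by omega⟩ : Fin n) < a ⟨1, by omega⟩ :=
              ha (by simp [Fin.mk_lt_mk])
            linarith
          simpa [Fin.mk_lt_mk] using ha.lt_iff_lt.mp this
        have hlt2 : k + 1 < j + 2 := by
          have hstep : a (⟨j, by omega⟩ : Fin n) < a ⟨j + 1, by omega⟩ :=
            ha (by simp [Fin.mk_lt_mk])
          have : a (⟨k + 1, h1⟩ : Fin n) < a ⟨j + 1 + 1, by omega⟩ := by linarith
          simpa [Fin.mk_lt_mk] using ha.lt_iff_lt.mp this
        have hkj : (⟨k + 1, h1⟩ : Fin n) = ⟨j + 1, by omega⟩ := by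
          ext; simp; omega
        rw [hkj] at he
        exact he.symm
      · exfalso
        rw [hcdef] at he; simp only [dif_neg h1] at he
        have hlow : a (⟨1, by omega⟩ : Fin n) ≤ a ⟨min (k - (n - 2)) (n - 1), by omega⟩ :=
          ha.monotone (by simp [Fin.mk_le_mk]; omega)
        have hhigh : a (⟨j, by omega⟩ : Fin n) < a ⟨n - 1, by omega⟩ :=
          ha (by simp [Fin.mk_lt_mk]; omega)
        linarith
  intro j h2 hj
  exact main (n - 2 - j) j h2 hj rfl

theorem stmt_3 (n : ℕ) (hn : 5 ≤ n) (a : Fin n → ℝ) (ha : StrictMono a)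
    (h : (((Finset.univ : Finset (Fin n × Fin n)).filter (fun p => p.1 < p.2)).image
        (fun p => a p.1 + a p.2)).card = 2 * n - 3) :
    ∀ i j : Fin n, ∀ hi : (i : ℕ) + 1 < n, ∀ hj : (j : ℕ) + 1 < n,
      a ⟨i + 1, hi⟩ - a i = a ⟨j + 1, hj⟩ - a j := by
  -- direct consequences
  have key := sum_key n hn a ha h
  -- reversed sequence
  set b : Fin n → ℝ := fun i => -a i.rev with hbdef
  have hb : StrictMono b := by
    intro i j hij
    simp only [hbdef, neg_lt_neg_iff]
    exact ha (Fin.rev_lt_rev.mpr hij)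
  have hbcard : (((Finset.univ : Finset (Fin n × Fin n)).filter (fun p => p.1 < p.2)).image
      (fun p => b p.1 + b p.2)).card = 2 * n - 3 := by
    have himg : ((Finset.univ : Finset (Fin n × Fin n)).filter (fun p => p.1 < p.2)).image
        (fun p => b p.1 + b p.2) =
        (((Finset.univ : Finset (Fin n × Fin n)).filter (fun p => p.1 < p.2)).image
          (fun p => a p.1 + a p.2)).image (fun x => -x) := by
      ext x
      simp only [Finset.mem_image, Finset.mem_filter, Finset.mem_univ, true_and]
      constructor
      · rintro ⟨p, hp, rfl⟩
        exact ⟨a p.2.rev + a p.1.rev, ⟨(p.2.rev, p.1.rev), Fin.rev_lt_rev.mpr hp, rfl⟩,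
          by simp only [hbdef]; ring⟩
      · rintro ⟨y, ⟨q, hq, rfl⟩, rfl⟩
        refine ⟨(q.2.rev, q.1.rev), Fin.rev_lt_rev.mpr hq, ?_⟩
        simp only [hbdef, Fin.rev_rev]; ring
    rw [himg, Finset.card_image_of_injective _ neg_injective, h]
  have keyb := sum_key n hn b hb hbcard
  -- translate keyb : for 2 ≤ j ≤ n-2, d_{n-2-j} = d_{n-2}
  have hrevkey : ∀ k : ℕ, ∀ hk4 : k ≤ n - 4,
      a ⟨k + 1, by omega⟩ - a ⟨k, by omega⟩ = a ⟨n - 1, by omega⟩ - a ⟨n - 2, by omega⟩ := by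
    intro k hk
    have hkb := keyb (n - 2 - k) (by omega) (by omega)
    have hrv : ∀ (m : ℕ) (hm : m < n) (m' : ℕ) (hm' : m' < n), m' = n - 1 - m →
        b ⟨m, hm⟩ = -a ⟨m', hm'⟩ := by
      intro m hm m' hm' he
      simp only [hbdef, neg_inj]
      congr 1
      ext
      simp [Fin.val_rev]
      omega
    rw [hrv 1 (by omega) (n - 2) (by omega) (by omega),
        hrv (n - 2 - k) (by omega) (k + 1) (by omega) (by omega),
        hrv 0 (by omega) (n - 1) (by omega) (by omega),
        hrv (n - 2 - k + 1) (by omega) k (by omega) (by omega)] at hkb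
    linarith
  -- all gaps equal the first gap
  have hd : ∀ k : ℕ, ∀ hk : k + 1 < n,
      a ⟨k + 1, hk⟩ - a ⟨k, by omega⟩ = a ⟨1, by omega⟩ - a ⟨0, by omega⟩ := by
    intro k hk
    have hlast : a (⟨n - 2 + 1, by omega⟩ : Fin n) - a ⟨n - 2, by omega⟩
        = a ⟨1, by omega⟩ - a ⟨0, by omega⟩ := by
      have := key (n - 2) (by omega) (by omega)
      linarith
    rcases Nat.lt_or_ge k 2 with h2 | h2
    · interval_cases k
      · rfl
      · have h1 := hrevkey 1 (by omega)
        have e : (⟨n - 2 + 1, by omega⟩ : Fin n) = ⟨n - 1, by omega⟩ := by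
          ext; simp; omega
        rw [e] at hlast
        linarith
    · have := key k h2 (by omega)
      linarith
  intro i j hi hj
  have ei : a i = a ⟨(i : ℕ), by omega⟩ := rfl
  have ej : a j = a ⟨(j : ℕ), by omega⟩ := rfl
  rw [ei, ej, hd i hi, hd j hj]
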